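/- arXiv:1701.04034 — 2 statements merged into one kernel-verified Lean document; each statement's English description precedes it below -/
import Mathlib

section
/- Let A = k[x,y] and 𝔮 = (x,y). Let α, β ∈ A be units in the localization A_𝔮, let L₂(y) ∈ k[y], L₃(y) ∈ y·k[y], and Q(x) ∈ k[x]. Then in the localization A_𝔮 one has the ideal equality (x² − α·y·(x·L₂(y) + L₃(y)), y − β·x²·Q(x))·A_𝔮 = (x², y)·A_𝔮. -/
open MvPolynomial

/-- In `A = k[x,y]` localized at `𝔮 = (x,y)`: if `α, β` are local units, `L₂ ∈ k[y]`,
`L₃ ∈ y·k[y]` and `Q ∈ k[x]`, then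
`(x² − α·y·(x·L₂ + L₃), y − β·x²·Q) A_𝔮 = (x², y) A_𝔮`.
Here `x = X 0` and `y = X 1`. -/
theorem stmt14 {K : Type*} [Field K]
    (q : Ideal (MvPolynomial (Fin 2) K))
    (hq : q = Ideal.span {(X 0 : MvPolynomial (Fin 2) K), X 1})
    [q.IsPrime]
    (α β L₂ L₃ Q : MvPolynomial (Fin 2) K)
    (hα : IsUnit (algebraMap (MvPolynomial (Fin 2) K) (Localization.AtPrime q) α))
    (hβ : IsUnit (algebraMap (MvPolynomial (Fin 2) K) (Localization.AtPrime q) β))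
    (hL₂ : ∃ p : Polynomial K, L₂ = Polynomial.aeval (X 1 : MvPolynomial (Fin 2) K) p)
    (hL₃ : ∃ p : Polynomial K, L₃ = X 1 * Polynomial.aeval (X 1 : MvPolynomial (Fin 2) K) p)
    (hQ : ∃ p : Polynomial K, Q = Polynomial.aeval (X 0 : MvPolynomial (Fin 2) K) p) :
    (Ideal.span {X 0 ^ 2 - α * X 1 * (X 0 * L₂ + L₃), X 1 - β * X 0 ^ 2 * Q}).map
        (algebraMap (MvPolynomial (Fin 2) K) (Localization.AtPrime q)) =
      (Ideal.span {(X 0 : MvPolynomial (Fin 2) K) ^ 2, X 1}).map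
        (algebraMap (MvPolynomial (Fin 2) K) (Localization.AtPrime q)) := by
  obtain ⟨p₃, hp₃⟩ := hL₃
  let φ : MvPolynomial (Fin 2) K →+* Localization.AtPrime q :=
    algebraMap (MvPolynomial (Fin 2) K) (Localization.AtPrime q)
  have hmemM : (X 0 * L₂ + L₃ : MvPolynomial (Fin 2) K) ∈ q := by
    rw [hq, hp₃]
    exact Ideal.add_mem _ (Ideal.mul_mem_right _ _ (Ideal.subset_span (by simp)))
      (Ideal.mul_mem_right _ _ (Ideal.subset_span (by simp)))
  have hnot : (1 - α * β * (X 0 * L₂ + L₃) * Q : MvPolynomial (Fin 2) K) ∈ q.primeCompl := by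
    intro h
    have hm : (α * β * (X 0 * L₂ + L₃) * Q : MvPolynomial (Fin 2) K) ∈ q :=
      Ideal.mul_mem_right _ _ (Ideal.mul_mem_left _ _ hmemM)
    have h1 : (1 : MvPolynomial (Fin 2) K) ∈ q := by
      have := Ideal.add_mem q h hm; simpa using this
    exact (Ideal.IsPrime.ne_top ‹q.IsPrime›) (Ideal.eq_top_of_isUnit_mem _ h1 isUnit_one)
  have hu : IsUnit (φ (1 - α * β * (X 0 * L₂ + L₃) * Q)) :=
    (IsLocalization.AtPrime.isUnit_to_map_iff (Localization.AtPrime q) q _).2 hnot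
  rw [Ideal.map_span, Ideal.map_span, Set.image_insert_eq, Set.image_singleton,
    Set.image_insert_eq, Set.image_singleton]
  have key : φ (X 0 ^ 2 - α * X 1 * (X 0 * L₂ + L₃))
      + φ α * φ (X 0 * L₂ + L₃) * φ (X 1 - β * X 0 ^ 2 * Q)
      = φ (X 0 ^ 2) * φ (1 - α * β * (X 0 * L₂ + L₃) * Q) := by
    simp only [map_sub, map_mul, map_add, map_pow, map_one]
    ring
  have hmul : φ (X 0 ^ 2) * ↑hu.unit ∈
      Ideal.span {φ (X 0 ^ 2 - α * X 1 * (X 0 * L₂ + L₃)), φ (X 1 - β * X 0 ^ 2 * Q)} := by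
    rw [hu.unit_spec, ← key]
    exact Ideal.add_mem _ (Ideal.subset_span (by simp))
      (Ideal.mul_mem_left _ _ (Ideal.subset_span (by simp)))
  have hx2 : φ (X 0 ^ 2) ∈
      Ideal.span {φ (X 0 ^ 2 - α * X 1 * (X 0 * L₂ + L₃)), φ (X 1 - β * X 0 ^ 2 * Q)} := by
    have := Ideal.mul_mem_right (↑hu.unit⁻¹ : Localization.AtPrime q) _ hmul
    simpa [mul_assoc] using this
  have hy : φ (X 1) ∈
      Ideal.span {φ (X 0 ^ 2 - α * X 1 * (X 0 * L₂ + L₃)), φ (X 1 - β * X 0 ^ 2 * Q)} := by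
    have hrw : φ (X 1) = φ (X 1 - β * X 0 ^ 2 * Q) + φ β * φ Q * φ (X 0 ^ 2) := by
      simp only [map_sub, map_mul, map_pow]; ring
    rw [hrw]
    exact Ideal.add_mem _ (Ideal.subset_span (by simp)) (Ideal.mul_mem_left _ _ hx2)
  apply le_antisymm
  · rw [Ideal.span_le]
    rintro z (rfl | rfl) <;> rw [SetLike.mem_coe, Ideal.mem_span_pair]
    · exact ⟨1, -(φ α * (φ (X 0) * φ L₂ + φ L₃)), by
        simp only [map_sub, map_mul, map_add, map_pow]; ring⟩
    · exact ⟨-(φ β * φ Q), 1, by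
        simp only [map_sub, map_mul, map_pow]; ring⟩
  · rw [Ideal.span_le]
    rintro z (rfl | rfl)
    · exact hx2
    · exact hy
end

section
/- Let F(x,y) = y² − x^k + y·g(x,y) + h(x,y) ∈ k[x,y], where k ≥ 3 is an integer, g is homogeneous of degree k−1, and h has order (initial degree) at least k+1. Then the gradient ideal J(F) = (∂F/∂x, ∂F/∂y), localized at the maximal ideal 𝔮 = (x,y), satisfies J(F)·k[x,y]_𝔮 = (x^{k−1}, y)·k[x,y]_𝔮; in particular J(F)·k[x,y]_𝔮 is a complete intersection and F ∈ J(F)·k[x,y]_𝔮. -/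
open MvPolynomial Pointwise


theorem coeff_pderiv' {K : Type*} [CommRing K] {σ : Type*} [DecidableEq σ] (i : σ) (m : σ →₀ ℕ)
    (p : MvPolynomial σ K) :
    coeff m (pderiv i p) = (m i + 1) * coeff (m + Finsupp.single i 1) p := by
  induction p using MvPolynomial.induction_on' with
  | monomial s a =>
    rw [pderiv_monomial, coeff_monomial, coeff_monomial]
    by_cases hsi : s i = 0
    · have h1 : s ≠ m + Finsupp.single i 1 := by
        intro h
        rw [h] at hsi
        simp [Finsupp.add_apply, Finsupp.single_apply] at hsi
      rw [if_neg h1, hsi]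
      split_ifs <;> ring
    · have key : (s - Finsupp.single i 1 = m) ↔ (s = m + Finsupp.single i 1) := by
        constructor
        · intro h
          ext j
          have hj := DFunLike.congr_fun h j
          simp only [Finsupp.tsub_apply, Finsupp.add_apply, Finsupp.single_apply] at hj ⊢
          by_cases hij : i = j
          · subst hij; simp at hj ⊢; omega
          · simp only [if_neg hij] at hj ⊢; omega
        · intro h
          ext j
          have hj := DFunLike.congr_fun h j
          simp only [Finsupp.tsub_apply, Finsupp.add_apply, Finsupp.single_apply] at hj ⊢
          by_cases hij : i = j
          · subst hij; simp at hj ⊢; omega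
          · simp only [if_neg hij] at hj ⊢; omega
      simp only [key]
      split_ifs with h
      · have : s i = m i + 1 := by
          rw [h]; simp [Finsupp.add_apply, Finsupp.single_apply]
        rw [this]; push_cast; ring
      · ring
  | add p q hp hq => simp [map_add, coeff_add, hp, hq, mul_add]

theorem decomp {K : Type*} [CommRing K] (n : ℕ) (p : MvPolynomial (Fin 2) K)
    (hp : ∀ m : Fin 2 →₀ ℕ, m 1 = 0 → m 0 < n → coeff m p = 0) :
    ∃ w t : MvPolynomial (Fin 2) K, p = X 0 ^ n * w + X 1 * t := by
  classical
  refine ⟨∑ m ∈ p.support.filter (fun m => m 1 = 0),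
      monomial (m - Finsupp.single 0 n) (coeff m p),
    ∑ m ∈ p.support.filter (fun m => ¬ m 1 = 0),
      monomial (m - Finsupp.single 1 1) (coeff m p), ?_⟩
  rw [Finset.mul_sum, Finset.mul_sum]
  have e1 : ∀ m ∈ p.support.filter (fun m => m 1 = 0),
      X 0 ^ n * monomial (m - Finsupp.single 0 n) (coeff m p) = monomial m (coeff m p) := by
    intro m hm
    rw [Finset.mem_filter] at hm
    have hge : n ≤ m 0 := by
      by_contra hlt
      exact (mem_support_iff.mp hm.1) (hp m hm.2 (by omega))
    have h1 : Finsupp.single (0 : Fin 2) n + (m - Finsupp.single 0 n) = m := by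
      ext j
      have h2 : Finsupp.single (0 : Fin 2) n ≤ m := by
        rw [Finsupp.single_le_iff]; exact hge
      have := Finsupp.le_def.mp h2 j
      rw [Finsupp.add_apply, Finsupp.tsub_apply]
      omega
    rw [X_pow_eq_monomial, monomial_mul, one_mul, h1]
  have e2 : ∀ m ∈ p.support.filter (fun m => ¬ m 1 = 0),
      X 1 * monomial (m - Finsupp.single 1 1) (coeff m p) = monomial m (coeff m p) := by
    intro m hm
    rw [Finset.mem_filter] at hm
    have h1 : Finsupp.single (1 : Fin 2) 1 + (m - Finsupp.single 1 1) = m := by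
      ext j
      have h2 : Finsupp.single (1 : Fin 2) 1 ≤ m := by
        rw [Finsupp.single_le_iff]; omega
      have := Finsupp.le_def.mp h2 j
      rw [Finsupp.add_apply, Finsupp.tsub_apply]
      omega
    rw [X, monomial_mul, one_mul, h1]
  rw [Finset.sum_congr rfl e1, Finset.sum_congr rfl e2,
    Finset.sum_filter_add_sum_filter_not]
  exact p.as_sum

theorem extract1 {K : Type*} [CommRing K] {n : ℕ} (hn : 2 ≤ n)
    {p w t : MvPolynomial (Fin 2) K} (h : p = X 0 ^ n * w + X 1 * t) :
    constantCoeff w = coeff (Finsupp.single 0 n) p ∧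
    constantCoeff t = coeff (Finsupp.single (1 : Fin 2) 1) p := by
  classical
  constructor
  · have := congrArg (coeff (Finsupp.single 0 n)) h
    rw [coeff_add, X_pow_eq_monomial, coeff_monomial_mul', coeff_X_mul'] at this
    rw [if_pos le_rfl, if_neg, tsub_self] at this
    · rw [this]; simp [constantCoeff_eq]
    · simp [Finsupp.single_apply_eq_zero]
  · have := congrArg (coeff (Finsupp.single (1:Fin 2) 1)) h
    rw [coeff_add, X_pow_eq_monomial, coeff_monomial_mul', coeff_X_mul'] at this
    rw [if_neg, if_pos, tsub_self] at this
    · rw [this]; simp [constantCoeff_eq]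
    · simp
    · rw [Finsupp.single_le_iff]; simp; omega

theorem deg2 (m : Fin 2 →₀ ℕ) : m.degree = m 0 + m 1 := by
  rw [Finsupp.degree_apply]
  rw [Finset.sum_subset (Finset.subset_univ _)
    (fun x _ hx => Finsupp.notMem_support_iff.mp hx)]
  exact Fin.sum_univ_two m

theorem primeX0 {K : Type*} [Field K] : Prime (X 0 : MvPolynomial (Fin 2) K) := by
  rw [← MulEquiv.prime_iff (finSuccEquiv K 1).toRingEquiv.toMulEquiv]
  have : (finSuccEquiv K 1).toRingEquiv.toMulEquiv (X 0) = Polynomial.X := by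
    show (finSuccEquiv K 1) (X 0) = Polynomial.X
    exact finSuccEquiv_X_zero
  rw [this]
  exact Polynomial.prime_X

theorem notdvdX1 {K : Type*} [Field K] : ¬ (X 0 : MvPolynomial (Fin 2) K) ∣ X 1 := by
  intro ⟨c, hc⟩
  have := congrArg (eval (fun j : Fin 2 => if j = 1 then (1 : K) else 0)) hc
  simp at this

theorem reg2 {R : Type*} [CommRing R] [IsDomain R] (q : Ideal R) [q.IsPrime]
    (c : R) (hc : Prime c) (hcq : c ∈ q) (e : ℕ) (he : 0 < e) (b : R)
    (hb : ¬ c ∣ b) (hbq : b ∈ q) :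
    RingTheory.Sequence.IsRegular (Localization.AtPrime q)
      [algebraMap R (Localization.AtPrime q) (c ^ e),
       algebraMap R (Localization.AtPrime q) b] := by
  set S := Localization.AtPrime q
  set φ := algebraMap R S with hφ
  haveI : IsDomain S := IsLocalization.isDomain_localization q.primeCompl_le_nonZeroDivisors
  have hinj : Function.Injective φ := IsLocalization.injective S q.primeCompl_le_nonZeroDivisors
  have hc0 : c ^ e ≠ 0 := pow_ne_zero _ hc.ne_zero
  have ha0 : φ (c ^ e) ≠ 0 := fun hh => hc0 (hinj (by rw [hh, map_zero]))
  have hsm : (φ (c ^ e)) • (⊤ : Submodule S S) = (Ideal.span {φ (c ^ e)} : Ideal S) := by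
    rw [← Submodule.ideal_span_singleton_smul, smul_eq_mul, Ideal.mul_top]
  have key : ∀ z y : S, φ b * z = φ (c ^ e) * y → φ (c ^ e) ∣ z := by
    intro z y hzy
    obtain ⟨⟨r, s⟩, hz⟩ := IsLocalization.surj q.primeCompl z
    obtain ⟨⟨r', s'⟩, hy⟩ := IsLocalization.surj q.primeCompl y
    have heq : φ (b * r * s') = φ (c ^ e * r' * s) := by
      push_cast [map_mul]
      calc φ b * φ r * φ s' = (φ b * z) * φ s * φ s' := by rw [← hz]; ring
        _ = (φ (c ^ e) * y) * φ s * φ s' := by rw [hzy]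
        _ = φ (c ^ e) * (y * φ s') * φ s := by ring
        _ = φ (c ^ e) * φ r' * φ s := by rw [← hy]
    have heq' : b * r * s' = c ^ e * r' * s := hinj heq
    have hdvd : c ^ e ∣ (b * s') * r := ⟨r' * s, by linear_combination heq'⟩
    have hnd : ¬ c ∣ b * s' := by
      intro hd
      rcases hc.dvd_mul.mp hd with h | h
      · exact hb h
      · obtain ⟨d, hd'⟩ := h
        exact s'.2 (hd' ▸ Ideal.mul_mem_right d q hcq)
    obtain ⟨r₀, hr₀⟩ := hc.pow_dvd_of_dvd_mul_left e hnd hdvd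
    have hus : IsUnit (φ (s : R)) := IsLocalization.map_units S s
    refine ⟨φ r₀ * ↑hus.unit⁻¹, ?_⟩
    apply hus.mul_right_cancel
    calc z * φ (s : R) = φ r := hz
      _ = φ (c ^ e) * φ r₀ := by rw [hr₀, map_mul]
      _ = φ (c ^ e) * φ r₀ * (↑hus.unit⁻¹ * φ (s : R)) := by
          rw [IsUnit.val_inv_mul, mul_one]
      _ = φ (c ^ e) * (φ r₀ * ↑hus.unit⁻¹) * φ (s : R) := by ring
  constructor
  · refine RingTheory.Sequence.IsWeaklyRegular.cons ?_ ?_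
    · intro x y hxy
      exact mul_left_cancel₀ ha0 (by simpa [smul_eq_mul] using hxy)
    · rw [RingTheory.Sequence.isWeaklyRegular_singleton_iff]
      intro x y hxy
      obtain ⟨x', rfl⟩ := Submodule.Quotient.mk_surjective _ x
      obtain ⟨y', rfl⟩ := Submodule.Quotient.mk_surjective _ y
      have hxy0 : (Submodule.Quotient.mk (φ b • x') :
          QuotSMulTop (φ (c ^ e)) S) = Submodule.Quotient.mk (φ b • y') := by
        rw [Submodule.Quotient.mk_smul, Submodule.Quotient.mk_smul]
        exact hxy
      have hxy' : φ b • x' - φ b • y' ∈ φ (c ^ e) • (⊤ : Submodule S S) :=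
        (Submodule.Quotient.eq _).mp hxy0
      rw [Submodule.Quotient.eq]
      rw [hsm] at hxy' ⊢
      rw [Ideal.mem_span_singleton] at hxy' ⊢
      obtain ⟨y₀, hy₀⟩ := hxy'
      have : φ b * (x' - y') = φ (c ^ e) * y₀ := by
        rw [← hy₀]; simp [smul_eq_mul]; ring
      exact key _ _ this
  · intro htop
    have h1 : Ideal.ofList [φ (c ^ e), φ b] • (⊤ : Submodule S S) =
        (Ideal.ofList [φ (c ^ e), φ b] : Ideal S) := by
      rw [smul_eq_mul, Ideal.mul_top]
    rw [h1] at htop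
    have hle : (Ideal.ofList [φ (c ^ e), φ b] : Ideal S) ≤
        IsLocalRing.maximalIdeal S := by
      rw [← Localization.AtPrime.map_eq_maximalIdeal]
      apply Ideal.span_le.mpr
      intro x hx
      simp only [Set.mem_setOf_eq, List.mem_cons, List.mem_singleton, List.not_mem_nil,
        or_false] at hx
      rcases hx with rfl | rfl
      · exact Ideal.mem_map_of_mem _ (Ideal.pow_mem_of_mem q hcq e he)
      · exact Ideal.mem_map_of_mem _ hbq
    rw [← htop] at hle
    exact (IsLocalRing.maximalIdeal.isMaximal S).ne_top (top_le_iff.mp hle)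

noncomputable def gradIdeal {σ : Type*} {K : Type*} [CommRing K] (f : MvPolynomial σ K) :
    Ideal (MvPolynomial σ K) :=
  Ideal.span (Set.range fun i => pderiv i f)

/-- For `F = y² − x^k + y·g(x,y) + h(x,y)` with `k ≥ 3`, `g` homogeneous of degree `k − 1`
and `ord h ≥ k + 1`, the gradient ideal localized at the origin `𝔮 = (x,y)` equals
`(x^{k−1}, y)`; in particular it is a complete intersection and `F ∈ J(F)_𝔮`.
Here `x = X 0` and `y = X 1`. -/
theorem stmt15 {K : Type*} [Field K] [IsAlgClosed K] [CharZero K] (k : ℕ) (hk : 3 ≤ k)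
    (g h F : MvPolynomial (Fin 2) K)
    (hg : g.IsHomogeneous (k - 1))
    (hh : ∀ m : Fin 2 →₀ ℕ, m 0 + m 1 < k + 1 → coeff m h = 0)
    (hF : F = X 1 ^ 2 - X 0 ^ k + X 1 * g + h)
    (q : Ideal (MvPolynomial (Fin 2) K))
    (hq : q = Ideal.span {(X 0 : MvPolynomial (Fin 2) K), X 1})
    [q.IsPrime] :
    (gradIdeal F).map (algebraMap (MvPolynomial (Fin 2) K) (Localization.AtPrime q)) =
      (Ideal.span {(X 0 : MvPolynomial (Fin 2) K) ^ (k - 1), X 1}).map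
        (algebraMap (MvPolynomial (Fin 2) K) (Localization.AtPrime q)) ∧
    (∃ rs : List (Localization.AtPrime q), rs.length = 2 ∧
        RingTheory.Sequence.IsRegular (Localization.AtPrime q) rs ∧
        Ideal.span {x | x ∈ rs} =
          (gradIdeal F).map (algebraMap (MvPolynomial (Fin 2) K) (Localization.AtPrime q))) ∧
    algebraMap (MvPolynomial (Fin 2) K) (Localization.AtPrime q) F ∈
      (gradIdeal F).map (algebraMap (MvPolynomial (Fin 2) K) (Localization.AtPrime q)) := by
  classical
  set n := k - 1 with hn
  have hn2 : 2 ≤ n := by omega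
  have hnk : n + 1 = k := by omega
  -- basic coefficient vanishing
  have cF0 : ∀ m : Fin 2 →₀ ℕ, m 0 + m 1 < k → m ≠ Finsupp.single 1 2 → coeff m F = 0 := by
    intro m hm hm2
    rw [hF]
    simp only [coeff_add, coeff_sub]
    have e1 : coeff m (X 1 ^ 2 : MvPolynomial (Fin 2) K) = 0 := by
      rw [X_pow_eq_monomial, coeff_monomial, if_neg (fun hh' => hm2 hh'.symm)]
    have e2 : coeff m (X 0 ^ k : MvPolynomial (Fin 2) K) = 0 := by
      rw [X_pow_eq_monomial, coeff_monomial, if_neg]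
      intro hh'
      have h0 := DFunLike.congr_fun hh' 0
      have h1 := DFunLike.congr_fun hh' 1
      simp [Finsupp.single_apply] at h0 h1
      omega
    have e3 : coeff m (X 1 * g) = 0 := by
      rw [coeff_X_mul']
      split_ifs with hmem
      · apply hg.coeff_eq_zero
        rw [deg2]
        have hm1 : 1 ≤ m 1 := by
          rw [Finsupp.mem_support_iff] at hmem; omega
        simp only [Finsupp.tsub_apply, Finsupp.single_apply]
        norm_num
        omega
      · rfl
    rw [e1, e2, e3, hh m (by omega)]
    ring
  -- coefficient of x^k in F is -1
  have cFk : coeff (Finsupp.single 0 k) F = -1 := by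
    rw [hF]
    simp only [coeff_add, coeff_sub]
    have e1 : coeff (Finsupp.single 0 k) (X 1 ^ 2 : MvPolynomial (Fin 2) K) = 0 := by
      rw [X_pow_eq_monomial, coeff_monomial, if_neg]
      intro hh'
      have h1 := DFunLike.congr_fun hh' 1
      simp [Finsupp.single_apply] at h1
    have e2 : coeff (Finsupp.single 0 k) (X 0 ^ k : MvPolynomial (Fin 2) K) = 1 := by
      rw [X_pow_eq_monomial, coeff_monomial, if_pos rfl]
    have e3 : coeff (Finsupp.single 0 k) (X 1 * g) = 0 := by
      rw [coeff_X_mul', if_neg]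
      simp [Finsupp.single_apply]
    have e4 : coeff (Finsupp.single 0 k) h = 0 := by
      apply hh
      simp [Finsupp.single_apply]
    rw [e1, e2, e3, e4]
    ring
  -- coefficient of y^2 in F is 1
  have cF2 : coeff (Finsupp.single 1 2) F = 1 := by
    rw [hF]
    simp only [coeff_add, coeff_sub]
    have e1 : coeff (Finsupp.single 1 2) (X 1 ^ 2 : MvPolynomial (Fin 2) K) = 1 := by
      rw [X_pow_eq_monomial, coeff_monomial, if_pos rfl]
    have e2 : coeff (Finsupp.single 1 2) (X 0 ^ k : MvPolynomial (Fin 2) K) = 0 := by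
      rw [X_pow_eq_monomial, coeff_monomial, if_neg]
      intro hh'
      have h1 := DFunLike.congr_fun hh' 1
      simp [Finsupp.single_apply] at h1
    have e3 : coeff (Finsupp.single 1 2) (X 1 * g) = 0 := by
      rw [coeff_X_mul', if_pos (by simp)]
      apply hg.coeff_eq_zero
      rw [deg2]
      simp only [Finsupp.tsub_apply, Finsupp.single_apply]
      norm_num
      omega
    have e4 : coeff (Finsupp.single 1 2) h = 0 := by
      apply hh
      simp [Finsupp.single_apply]
      omega
    rw [e1, e2, e3, e4]
    ring
  -- decompositions
  have h0 : ∀ m : Fin 2 →₀ ℕ, m 1 = 0 → m 0 < n → coeff m (pderiv 0 F) = 0 := by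
    intro m hm1 hm0
    rw [coeff_pderiv']
    apply mul_eq_zero_of_right
    apply cF0
    · simp only [Finsupp.add_apply, Finsupp.single_apply]
      norm_num
      omega
    · intro hh'
      have h1 := DFunLike.congr_fun hh' 0
      simp [Finsupp.add_apply, Finsupp.single_apply] at h1
  have h1 : ∀ m : Fin 2 →₀ ℕ, m 1 = 0 → m 0 < n → coeff m (pderiv 1 F) = 0 := by
    intro m hm1 hm0
    rw [coeff_pderiv']
    apply mul_eq_zero_of_right
    apply cF0
    · simp only [Finsupp.add_apply, Finsupp.single_apply]
      norm_num
      omega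
    · intro hh'
      have h1 := DFunLike.congr_fun hh' 1
      simp [Finsupp.add_apply, Finsupp.single_apply] at h1
      omega
  have hFd : ∀ m : Fin 2 →₀ ℕ, m 1 = 0 → m 0 < n → coeff m F = 0 := by
    intro m hm1 hm0
    apply cF0
    · omega
    · intro hh'
      have h1 := DFunLike.congr_fun hh' 1
      simp [Finsupp.single_apply] at h1
      omega
  obtain ⟨w, t, hwt⟩ := decomp n (pderiv 0 F) h0
  obtain ⟨v, u, hvu⟩ := decomp n (pderiv 1 F) h1
  obtain ⟨a, b, hab⟩ := decomp n F hFd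
  -- constant terms
  obtain ⟨hw, ht⟩ := extract1 hn2 hwt
  obtain ⟨hv, hu⟩ := extract1 hn2 hvu
  have hw' : constantCoeff w = -(k : K) := by
    rw [hw, coeff_pderiv']
    have e : Finsupp.single (0 : Fin 2) n + Finsupp.single 0 1 = Finsupp.single 0 k := by
      rw [← Finsupp.single_add, hnk]
    rw [e, cFk]
    simp only [Finsupp.single_eq_same]
    have : ((n : K) + 1) = (k : K) := by
      rw [← hnk]; push_cast; ring
    rw [this]; ring
  have ht' : constantCoeff t = 0 := by
    rw [ht, coeff_pderiv']
    apply mul_eq_zero_of_right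
    apply cF0
    · simp [Finsupp.add_apply, Finsupp.single_apply]
      omega
    · intro hh'
      have h1 := DFunLike.congr_fun hh' 0
      simp [Finsupp.add_apply, Finsupp.single_apply] at h1
  have hu' : constantCoeff u = 2 := by
    rw [hu, coeff_pderiv']
    have e : Finsupp.single (1 : Fin 2) 1 + Finsupp.single 1 1 = Finsupp.single 1 2 := by
      rw [← Finsupp.single_add]
    rw [e, cF2]
    simp [Finsupp.single_eq_same]
    norm_num
  -- the determinant
  set D := w * u - t * v with hD
  have hDc : constantCoeff D ≠ 0 := by
    rw [hD, map_sub, map_mul, map_mul, hw', ht', hu']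
    simp only [zero_mul, sub_zero]
    intro hc
    have h2 : ((2 * k : ℕ) : K) ≠ 0 := Nat.cast_ne_zero.mpr (by omega)
    apply h2
    push_cast
    linear_combination -hc
  have hDq : D ∉ q := by
    intro hmem
    apply hDc
    have hle : q ≤ RingHom.ker (constantCoeff : MvPolynomial (Fin 2) K →+* K) := by
      rw [hq, Ideal.span_le]
      intro x hx
      rcases hx with rfl | hx
      · simp [RingHom.mem_ker]
      · simp only [Set.mem_singleton_iff] at hx
        subst hx
        simp [RingHom.mem_ker]
    exact hle hmem
  -- ring identities
  have idX : X 0 ^ n * D = u * pderiv 0 F - t * pderiv 1 F := by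
    rw [hwt, hvu, hD]; ring
  have idY : X 1 * D = w * pderiv 1 F - v * pderiv 0 F := by
    rw [hwt, hvu, hD]; ring
  -- inclusion of ideals in the polynomial ring
  have hXn : (X 0 : MvPolynomial (Fin 2) K) ^ n ∈ Ideal.span {(X 0 : MvPolynomial (Fin 2) K) ^ n, X 1} :=
    Ideal.subset_span (by simp)
  have hX1 : (X 1 : MvPolynomial (Fin 2) K) ∈ Ideal.span {(X 0 : MvPolynomial (Fin 2) K) ^ n, X 1} :=
    Ideal.subset_span (by simp)
  have hsub : gradIdeal F ≤ Ideal.span {(X 0 : MvPolynomial (Fin 2) K) ^ n, X 1} := by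
    rw [gradIdeal, Ideal.span_le, Set.range_subset_iff]
    intro i
    fin_cases i
    · show pderiv 0 F ∈ _
      rw [hwt]
      exact add_mem (Ideal.mul_mem_right _ _ hXn) (Ideal.mul_mem_right _ _ hX1)
    · show pderiv 1 F ∈ _
      rw [hvu]
      exact add_mem (Ideal.mul_mem_right _ _ hXn) (Ideal.mul_mem_right _ _ hX1)
  set φ := algebraMap (MvPolynomial (Fin 2) K) (Localization.AtPrime q) with hφ
  have hm0 : φ (pderiv 0 F) ∈ (gradIdeal F).map φ :=
    Ideal.mem_map_of_mem _ (Ideal.subset_span ⟨0, rfl⟩)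
  have hm1 : φ (pderiv 1 F) ∈ (gradIdeal F).map φ :=
    Ideal.mem_map_of_mem _ (Ideal.subset_span ⟨1, rfl⟩)
  have hU : IsUnit (φ D) := IsLocalization.map_units _ (⟨D, hDq⟩ : q.primeCompl)
  have hXnmem : φ (X 0 ^ n) ∈ (gradIdeal F).map φ := by
    have h1 : φ (X 0 ^ n) * φ D ∈ (gradIdeal F).map φ := by
      have e : φ (X 0 ^ n) * φ D = φ u * φ (pderiv 0 F) - φ t * φ (pderiv 1 F) := by
        rw [← map_mul, idX, map_sub, map_mul, map_mul]
      rw [e]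
      exact sub_mem (Ideal.mul_mem_left _ _ hm0) (Ideal.mul_mem_left _ _ hm1)
    have e2 : φ (X 0 ^ n) = (φ (X 0 ^ n) * φ D) * ↑hU.unit⁻¹ := by
      rw [mul_assoc, IsUnit.mul_val_inv, mul_one]
    rw [e2]
    exact Ideal.mul_mem_right _ _ h1
  have hX1mem : φ (X 1) ∈ (gradIdeal F).map φ := by
    have h1 : φ (X 1) * φ D ∈ (gradIdeal F).map φ := by
      have e : φ (X 1) * φ D = φ w * φ (pderiv 1 F) - φ v * φ (pderiv 0 F) := by
        rw [← map_mul, idY, map_sub, map_mul, map_mul]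
      rw [e]
      exact sub_mem (Ideal.mul_mem_left _ _ hm1) (Ideal.mul_mem_left _ _ hm0)
    have e2 : φ (X 1) = (φ (X 1) * φ D) * ↑hU.unit⁻¹ := by
      rw [mul_assoc, IsUnit.mul_val_inv, mul_one]
    rw [e2]
    exact Ideal.mul_mem_right _ _ h1
  have part1 : (gradIdeal F).map φ = (Ideal.span {(X 0 : MvPolynomial (Fin 2) K) ^ n, X 1}).map φ := by
    apply le_antisymm
    · exact Ideal.map_mono hsub
    · rw [Ideal.map_span, Set.image_insert_eq, Set.image_singleton, Ideal.span_le]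
      intro x hx
      rcases hx with rfl | hx
      · exact hXnmem
      · simp only [Set.mem_singleton_iff] at hx
        subst hx
        exact hX1mem
  refine ⟨part1, ?_, ?_⟩
  · refine ⟨[φ (X 0 ^ n), φ (X 1)], rfl, ?_, ?_⟩
    · have := reg2 q (X 0) primeX0 ?_ n (by omega) (X 1) notdvdX1 ?_
      · rw [map_pow] at this ⊢
        exact this
      · rw [hq]; exact Ideal.subset_span (by simp)
      · rw [hq]; exact Ideal.subset_span (by simp)
    · have e : {x | x ∈ [φ (X 0 ^ n), φ (X 1)]} = ({φ (X 0 ^ n), φ (X 1)} : Set _) := by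
        ext x
        simp [List.mem_cons]
      rw [e, part1, Ideal.map_span, Set.image_insert_eq, Set.image_singleton]
  · rw [part1]
    apply Ideal.mem_map_of_mem
    rw [hab]
    exact add_mem (Ideal.mul_mem_right _ _ hXn) (Ideal.mul_mem_right _ _ hX1)
end
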